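/- Let d ≥ 1, σ > 0 and α > 1, let (Ω, P) be a probability space, and let (g_z)_{z∈ℤ^d} be measurable real random variables such that each g_z has the Gaussian distribution N(0, σ²) (no assumption is made on their joint distribution). Then almost surely, (n^α − (n−1)^α)^{-1} · max{ |g_z| : z ∈ ℤ^d, ‖z‖ ≤ n } → 0 as n → ∞, where ‖·‖ is the ℓ∞ norm. -/

import Mathlib

open MeasureTheory ProbabilityTheory Filter Set


lemma gauss_tail_right (v : NNReal) (hv : v ≠ 0) (t : ℝ) (ht : 0 ≤ t) :
    gaussianReal 0 v (Ici t) ≤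
      ENNReal.ofReal ((Real.sqrt (2 * Real.pi * v))⁻¹ * Real.exp (v / 2) * Real.exp (-t)) := by
  have hv0 : (0:ℝ) < v := by positivity
  rw [gaussianReal_of_var_ne_zero _ hv, withDensity_apply _ measurableSet_Ici]
  have hbound : ∀ x ∈ Ici t, gaussianPDF 0 v x ≤
      ENNReal.ofReal ((Real.sqrt (2 * Real.pi * v))⁻¹ * Real.exp (v / 2) * Real.exp (-x)) := by
    intro x hx
    rw [gaussianPDF]
    apply ENNReal.ofReal_le_ofReal
    rw [gaussianPDFReal]
    have hexp : Real.exp (-(x - 0)^2 / (2*(v:ℝ))) ≤ Real.exp ((v:ℝ)/2) * Real.exp (-x) := by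
      rw [← Real.exp_add, Real.exp_le_exp]
      have hx0 : (0:ℝ) ≤ x := le_trans ht hx
      have key : 0 ≤ (x - v)^2 / (2 * (v:ℝ)) := by positivity
      have heq : -(x - 0)^2 / (2*(v:ℝ)) = (v:ℝ)/2 + -x - (x - v)^2 / (2*(v:ℝ)) := by
        field_simp
        ring
      rw [heq]
      linarith
    calc (Real.sqrt (2 * Real.pi * (v:ℝ)))⁻¹ * Real.exp (-(x - 0)^2 / (2*(v:ℝ)))
        ≤ (Real.sqrt (2 * Real.pi * (v:ℝ)))⁻¹ * (Real.exp ((v:ℝ)/2) * Real.exp (-x)) :=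
          mul_le_mul_of_nonneg_left hexp (by positivity)
      _ = (Real.sqrt (2 * Real.pi * (v:ℝ)))⁻¹ * Real.exp ((v:ℝ)/2) * Real.exp (-x) :=
          (mul_assoc _ _ _).symm
  have hmeas : Measurable fun x : ℝ =>
      ENNReal.ofReal ((Real.sqrt (2 * Real.pi * v))⁻¹ * Real.exp (v / 2) * Real.exp (-x)) :=
    ENNReal.measurable_ofReal.comp ((measurable_neg.exp).const_mul _)
  have hInt : IntegrableOn (fun x : ℝ =>
      (Real.sqrt (2 * Real.pi * v))⁻¹ * Real.exp (v / 2) * Real.exp (-x)) (Ici t) := by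
    rw [IntegrableOn, ← restrict_Ioi_eq_restrict_Ici]
    apply Integrable.const_mul
    exact (by simpa using exp_neg_integrableOn_Ioi t one_pos : IntegrableOn (fun x : ℝ => Real.exp (-x)) (Ioi t))
  calc ∫⁻ x in Ici t, gaussianPDF 0 v x
      ≤ ∫⁻ x in Ici t,
          ENNReal.ofReal ((Real.sqrt (2 * Real.pi * v))⁻¹ * Real.exp (v / 2) * Real.exp (-x)) :=
        setLIntegral_mono hmeas hbound
    _ = ENNReal.ofReal (∫ x in Ici t,
          (Real.sqrt (2 * Real.pi * v))⁻¹ * Real.exp (v / 2) * Real.exp (-x)) := by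
        rw [← ofReal_integral_eq_lintegral_ofReal hInt]
        exact Filter.Eventually.of_forall fun x => by positivity
    _ = ENNReal.ofReal ((Real.sqrt (2 * Real.pi * v))⁻¹ * Real.exp (v / 2) * Real.exp (-t)) := by
        rw [integral_const_mul, ← restrict_Ioi_eq_restrict_Ici, integral_exp_neg_Ioi]

lemma gauss_tail_abs (v : NNReal) (hv : v ≠ 0) (t : ℝ) (ht : 0 ≤ t) :
    gaussianReal 0 v {x : ℝ | t ≤ |x|} ≤
      ENNReal.ofReal (2 * ((Real.sqrt (2 * Real.pi * v))⁻¹ * Real.exp (v / 2)) * Real.exp (-t)) := by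
  set A : ℝ := (Real.sqrt (2 * Real.pi * v))⁻¹ * Real.exp (v / 2) with hA
  have hA0 : 0 ≤ A := by positivity
  have hsub : {x : ℝ | t ≤ |x|} ⊆ Ici t ∪ Iic (-t) := by
    intro x hx
    rcases le_abs.mp (by simpa using hx : t ≤ |x|) with h | h
    · exact Or.inl h
    · exact Or.inr (by simpa [Set.mem_Iic] using le_neg.mp (by linarith))
  have hsym : gaussianReal 0 v (Iic (-t)) = gaussianReal 0 v (Ici t) := by
    have hmap := gaussianReal_map_const_mul (μ := 0) (v := v) (-1)
    have h1 : (⟨(-1:ℝ)^2, sq_nonneg _⟩ : NNReal) = 1 := by ext; norm_num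
    rw [mul_zero] at hmap
    have h2 : ∀ h, (NNReal.mk ((-1:ℝ)^2) h) * v = v := fun h => by ext; simp
    rw [h2] at hmap
    have hpre : ((-1:ℝ) * ·) ⁻¹' (Ici t) = Iic (-t) := by
      ext x
      simp only [Set.mem_preimage, Set.mem_Ici, Set.mem_Iic]
      constructor <;> intro h <;> linarith
    calc gaussianReal 0 v (Iic (-t))
        = gaussianReal 0 v (((-1:ℝ) * ·) ⁻¹' (Ici t)) := by rw [hpre]
      _ = ((gaussianReal 0 v).map ((-1:ℝ) * ·)) (Ici t) :=
          (Measure.map_apply (measurable_id.const_mul _) measurableSet_Ici).symm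
      _ = gaussianReal 0 v (Ici t) := by rw [hmap]
  calc gaussianReal 0 v {x : ℝ | t ≤ |x|}
      ≤ gaussianReal 0 v (Ici t ∪ Iic (-t)) := measure_mono hsub
    _ ≤ gaussianReal 0 v (Ici t) + gaussianReal 0 v (Iic (-t)) := measure_union_le _ _
    _ ≤ ENNReal.ofReal (A * Real.exp (-t)) + ENNReal.ofReal (A * Real.exp (-t)) := by
        refine add_le_add (gauss_tail_right v hv t ht) ?_
        rw [hsym]
        exact gauss_tail_right v hv t ht
    _ = ENNReal.ofReal (2 * A * Real.exp (-t)) := by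
        rw [← ENNReal.ofReal_add (by positivity) (by positivity)]
        ring_nf

lemma aux_tendsto (ε β s : ℝ) (hε : 0 < ε) (hβ : 0 < β) :
    Tendsto (fun x : ℝ => x ^ s * Real.exp (-(ε * x ^ β))) atTop (nhds 0) := by
  have h := (tendsto_rpow_mul_exp_neg_mul_atTop_nhds_zero (s / β) ε hε).comp
    (tendsto_rpow_atTop hβ)
  refine h.congr' ?_
  filter_upwards [eventually_ge_atTop (1:ℝ)] with x hx
  have hx0 : (0:ℝ) ≤ x := by linarith
  have : (x ^ β) ^ (s / β) = x ^ s := by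
    rw [← Real.rpow_mul hx0, mul_div_cancel₀ _ (ne_of_gt hβ)]
  simp only [Function.comp]
  rw [this, neg_mul]

lemma aux_summable (d : ℕ) (A ε β : ℝ) (hε : 0 < ε) (hβ : 0 < β) :
    Summable (fun n : ℕ => (2*(n:ℝ)+1)^d * (A * Real.exp (-(ε * (n:ℝ)^β)))) := by
  set f : ℕ → ℝ := fun n => (2*(n:ℝ)+1)^d * (A * Real.exp (-(ε * (n:ℝ)^β))) with hf
  have hsum : Summable (fun n : ℕ => (n:ℝ) ^ (-2:ℝ)) :=
    Real.summable_nat_rpow.2 (by norm_num)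
  refine summable_of_isBigO_nat hsum ?_
  refine Asymptotics.IsLittleO.isBigO ?_
  refine Asymptotics.isLittleO_of_tendsto' ?_ ?_
  · filter_upwards [eventually_ge_atTop 1] with n hn h0
    exfalso
    have : (0:ℝ) < (n:ℝ) ^ (-2:ℝ) :=
      Real.rpow_pos_of_pos (by exact_mod_cast Nat.lt_of_lt_of_le Nat.zero_lt_one hn) _
    exact this.ne' h0
  · -- f n / n^(-2) = f n * n^2, squeeze by 3^d*|A| * n^(d+2) * exp(-ε n^β)
    have hg : Tendsto (fun n : ℕ =>
        3^d * |A| * ((n:ℝ) ^ ((d:ℝ)+2) * Real.exp (-(ε * (n:ℝ)^β)))) atTop (nhds 0) := by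
      have := (aux_tendsto ε β ((d:ℝ)+2) hε hβ).comp tendsto_natCast_atTop_atTop
      simpa using this.const_mul (3^d * |A|)
    refine squeeze_zero_norm' ?_ (by simpa using hg)
    filter_upwards [eventually_ge_atTop 1] with n hn
    have hn1 : (1:ℝ) ≤ (n:ℝ) := by exact_mod_cast hn
    have hn0 : (0:ℝ) ≤ (n:ℝ) := by linarith
    have hdiv : f n / (n:ℝ) ^ (-2:ℝ) = f n * (n:ℝ)^(2:ℕ) := by
      rw [Real.rpow_neg hn0, div_inv_eq_mul]
      norm_num [Real.rpow_natCast]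
    rw [hdiv, norm_mul, norm_mul, norm_mul]
    have h1 : ‖(2*(n:ℝ)+1)^d‖ ≤ 3^d * (n:ℝ)^d := by
      rw [norm_pow, Real.norm_eq_abs, abs_of_nonneg (by linarith), ← mul_pow]
      exact pow_le_pow_left₀ (by linarith) (by linarith) d
    have h2 : ‖(n:ℝ)^(2:ℕ)‖ = (n:ℝ)^(2:ℕ) := by
      rw [Real.norm_eq_abs, abs_of_nonneg (by positivity)]
    calc ‖(2*(n:ℝ)+1)^d‖ * (‖A‖ * ‖Real.exp (-(ε * (n:ℝ)^β))‖) * ‖(n:ℝ)^(2:ℕ)‖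
        ≤ (3^d * (n:ℝ)^d) * (|A| * Real.exp (-(ε * (n:ℝ)^β))) * (n:ℝ)^(2:ℕ) := by
          rw [h2]
          refine mul_le_mul_of_nonneg_right ?_ (by positivity)
          have h3 : ‖A‖ * ‖Real.exp (-(ε * (n:ℝ)^β))‖ = |A| * Real.exp (-(ε * (n:ℝ)^β)) := by
            rw [Real.norm_eq_abs, Real.norm_eq_abs, abs_of_nonneg (Real.exp_nonneg _)]
          rw [h3]
          exact mul_le_mul_of_nonneg_right h1 (by positivity)
      _ = 3^d * |A| * ((n:ℝ) ^ ((d:ℝ)+2) * Real.exp (-(ε * (n:ℝ)^β))) := by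
          rw [Real.rpow_add (by linarith : (0:ℝ) < n), Real.rpow_natCast,
            show ((2:ℝ)) = ((2:ℕ):ℝ) by norm_num, Real.rpow_natCast]
          ring

/-- If `α > 1` and each `g_z`, `z ∈ ℤ^d`, is `N(0, σ²)`-distributed (with no assumption on
the joint distribution), then almost surely
`(n^α − (n−1)^α)⁻¹ · max{ |g_z| : ‖z‖ ≤ n } → 0` as `n → ∞`,
where `‖·‖` is the `ℓ∞` norm on `ℤ^d = (Fin d → ℤ)`. -/
theorem gaussian_max_over_gap_tendsto_zero
    (d : ℕ) (hd : 1 ≤ d) (σ : ℝ) (hσ : 0 < σ) (α : ℝ) (hα : 1 < α)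
    {Ω : Type*} [MeasurableSpace Ω] (P : Measure Ω) [IsProbabilityMeasure P]
    (g : (Fin d → ℤ) → Ω → ℝ) (hmeas : ∀ z, Measurable (g z))
    (hlaw : ∀ z, P.map (g z) = gaussianReal 0 ⟨σ ^ 2, sq_nonneg σ⟩) :
    ∀ᵐ ω ∂P,
      Filter.Tendsto (fun n : ℕ =>
        ((n : ℝ) ^ α - ((n : ℝ) - 1) ^ α)⁻¹ *
          sSup ((fun z => |g z ω|) '' {z : Fin d → ℤ | ‖z‖ ≤ (n : ℝ)}))
        Filter.atTop (nhds 0) := by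
  set v : NNReal := ⟨σ ^ 2, sq_nonneg σ⟩ with hvdef
  have hv : v ≠ 0 := by
    intro h
    have : σ ^ 2 = 0 := congrArg NNReal.toReal h
    exact (pow_ne_zero 2 hσ.ne') this
  set A : ℝ := 2 * ((Real.sqrt (2 * Real.pi * v))⁻¹ * Real.exp (v / 2)) with hAdef
  have hA0 : 0 ≤ A := by positivity
  -- tail bound for each variable
  have htail : ∀ (z : Fin d → ℤ) (t : ℝ), 0 ≤ t →
      P {ω | t ≤ |g z ω|} ≤ ENNReal.ofReal (A * Real.exp (-t)) := by
    intro z t ht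
    have hm : MeasurableSet {x : ℝ | t ≤ |x|} :=
      measurableSet_le measurable_const measurable_abs
    have : {ω | t ≤ |g z ω|} = g z ⁻¹' {x : ℝ | t ≤ |x|} := rfl
    rw [this, ← Measure.map_apply (hmeas z) hm, hlaw z]
    have := gauss_tail_abs v hv t ht
    rw [hAdef]
    exact this
  -- the cube as a finset
  set S : ℕ → Finset (Fin d → ℤ) :=
    fun n => Fintype.piFinset (fun _ : Fin d => Finset.Icc (-(n:ℤ)) (n:ℤ)) with hSdef
  have hSmem : ∀ (n : ℕ) (z : Fin d → ℤ), ‖z‖ ≤ (n:ℝ) ↔ z ∈ S n := by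
    intro n z
    rw [pi_norm_le_iff_of_nonneg (Nat.cast_nonneg n), Fintype.mem_piFinset]
    refine forall_congr' fun i => ?_
    rw [Int.norm_eq_abs, Finset.mem_Icc, ← abs_le, ← Int.cast_abs]
    constructor
    · intro h; exact_mod_cast h
    · intro h; exact_mod_cast h
  have hScard : ∀ n : ℕ, (S n).card = (2*n+1)^d := by
    intro n
    rw [hSdef, Fintype.card_piFinset]
    simp only [Int.card_Icc]
    rw [Finset.prod_const, Finset.card_univ, Fintype.card_fin]
    congr 1
    omega
  have hS0 : ∀ n : ℕ, (0 : Fin d → ℤ) ∈ S n := by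
    intro n
    rw [← hSmem]
    simp
  have hSset : ∀ n : ℕ, {z : Fin d → ℤ | ‖z‖ ≤ (n:ℝ)} = (S n : Set (Fin d → ℤ)) :=
    fun n => Set.ext fun z => by simpa using hSmem n z
  -- the max
  set M : Ω → ℕ → ℝ :=
    fun ω n => sSup ((fun z => |g z ω|) '' {z : Fin d → ℤ | ‖z‖ ≤ (n:ℝ)}) with hMdef
  have himg : ∀ (ω : Ω) (n : ℕ),
      (fun z => |g z ω|) '' {z : Fin d → ℤ | ‖z‖ ≤ (n:ℝ)}
        = (fun z => |g z ω|) '' (S n : Set (Fin d → ℤ)) := by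
    intro ω n; rw [hSset]
  have hfin : ∀ (ω : Ω) (n : ℕ),
      ((fun z => |g z ω|) '' (S n : Set (Fin d → ℤ))).Finite :=
    fun ω n => (S n).finite_toSet.image _
  have hne : ∀ (ω : Ω) (n : ℕ),
      ((fun z => |g z ω|) '' (S n : Set (Fin d → ℤ))).Nonempty :=
    fun ω n => ⟨|g 0 ω|, ⟨0, hS0 n, rfl⟩⟩
  have hMnonneg : ∀ (ω : Ω) (n : ℕ), 0 ≤ M ω n := by
    intro ω n
    show 0 ≤ sSup ((fun z => |g z ω|) '' {z : Fin d → ℤ | ‖z‖ ≤ (n:ℝ)})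
    rw [himg]
    exact le_trans (abs_nonneg _)
      (le_csSup (hfin ω n).bddAbove ⟨0, hS0 n, rfl⟩)
  have hMlt : ∀ (ω : Ω) (n : ℕ) (b : ℝ), b < M ω n → ∃ z ∈ S n, b ≤ |g z ω| := by
    intro ω n b hb
    by_contra hcon
    push_neg at hcon
    have : M ω n ≤ b := by
      show sSup ((fun z => |g z ω|) '' {z : Fin d → ℤ | ‖z‖ ≤ (n:ℝ)}) ≤ b
      rw [himg]
      refine csSup_le (hne ω n) ?_
      rintro x ⟨z, hz, rfl⟩
      exact (hcon z hz).le
    exact absurd hb (not_lt.mpr this)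
  -- gap lower bound
  set r : ℕ → ℝ := fun n => (n:ℝ) ^ α - ((n:ℝ) - 1) ^ α with hrdef
  have hsplit : ∀ b : ℝ, 0 ≤ b → b ^ α = b ^ (α - 1) * b := by
    intro b hb
    rcases eq_or_lt_of_le hb with h | h
    · rw [← h, Real.zero_rpow (by linarith), Real.zero_rpow (by linarith), zero_mul]
    · have h1 : b ^ (α - 1) * b = b ^ (α - 1) * b ^ (1:ℝ) := by rw [Real.rpow_one]
      rw [h1, ← Real.rpow_add h]
      norm_num
  have hr : ∀ n : ℕ, 1 ≤ n → (n:ℝ) ^ (α - 1) ≤ r n := by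
    intro n hn
    have hn1 : (1:ℝ) ≤ (n:ℝ) := by exact_mod_cast hn
    have hb : (0:ℝ) ≤ (n:ℝ) - 1 := by linarith
    have h1 : (n:ℝ) ^ α = (n:ℝ) ^ (α - 1) * (n:ℝ) := hsplit _ (by linarith)
    have h2 : ((n:ℝ) - 1) ^ α = ((n:ℝ) - 1) ^ (α - 1) * ((n:ℝ) - 1) := hsplit _ hb
    have h3 : ((n:ℝ) - 1) ^ (α - 1) ≤ (n:ℝ) ^ (α - 1) :=
      Real.rpow_le_rpow hb (by linarith) (by linarith)
    have h4 : ((n:ℝ) - 1) ^ (α - 1) * ((n:ℝ) - 1) ≤ (n:ℝ) ^ (α - 1) * ((n:ℝ) - 1) :=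
      mul_le_mul_of_nonneg_right h3 hb
    rw [hrdef]
    simp only
    rw [h1, h2]
    nlinarith
  have hrpos : ∀ n : ℕ, 1 ≤ n → 0 < r n := by
    intro n hn
    have : (0:ℝ) < (n:ℝ) ^ (α - 1) :=
      Real.rpow_pos_of_pos (by exact_mod_cast Nat.lt_of_lt_of_le Nat.zero_lt_one hn) _
    exact lt_of_lt_of_le this (hr n hn)
  -- Borel–Cantelli for each ε = 1/(k+1)
  have key : ∀ k : ℕ, ∀ᵐ ω ∂P, ∀ᶠ n in atTop,
      ¬ ((1/((k:ℝ)+1)) * r n < M ω n) := by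
    intro k
    set ε : ℝ := 1/((k:ℝ)+1) with hεdef
    have hε : 0 < ε := by positivity
    set s : ℕ → Set Ω := fun n => {ω | ε * r n < M ω n} with hsdef
    have hbound : ∀ n : ℕ, 1 ≤ n →
        P (s n) ≤ ENNReal.ofReal
          ((2*(n:ℝ)+1)^d * (A * Real.exp (-(ε * (n:ℝ) ^ (α - 1))))) := by
      intro n hn
      have ht0 : 0 ≤ ε * (n:ℝ) ^ (α - 1) := by positivity
      have hsub : s n ⊆ ⋃ z ∈ S n, {ω | ε * (n:ℝ) ^ (α - 1) ≤ |g z ω|} := by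
        intro ω hω
        have h1 : ε * (n:ℝ) ^ (α - 1) ≤ ε * r n :=
          mul_le_mul_of_nonneg_left (hr n hn) hε.le
        obtain ⟨z, hz, hzle⟩ := hMlt ω n _ hω
        exact Set.mem_biUnion hz (le_trans h1 hzle)
      calc P (s n) ≤ P (⋃ z ∈ S n, {ω | ε * (n:ℝ) ^ (α - 1) ≤ |g z ω|}) :=
            measure_mono hsub
        _ ≤ ∑ z ∈ S n, P {ω | ε * (n:ℝ) ^ (α - 1) ≤ |g z ω|} :=
            measure_biUnion_finset_le _ _
        _ ≤ ∑ _z ∈ S n, ENNReal.ofReal (A * Real.exp (-(ε * (n:ℝ) ^ (α - 1)))) :=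
            Finset.sum_le_sum fun z _ => htail z _ ht0
        _ = ((2*n+1)^d : ℕ) * ENNReal.ofReal (A * Real.exp (-(ε * (n:ℝ) ^ (α - 1)))) := by
            rw [Finset.sum_const, hScard n, nsmul_eq_mul]
        _ = ENNReal.ofReal
            ((2*(n:ℝ)+1)^d * (A * Real.exp (-(ε * (n:ℝ) ^ (α - 1))))) := by
            rw [← ENNReal.ofReal_natCast ((2*n+1)^d),
              ← ENNReal.ofReal_mul (by positivity)]
            congr 2
            push_cast
            ring
    -- summable majorant
    set u : ℕ → ℝ := fun n => if n = 0 then 1 else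
      (2*(n:ℝ)+1)^d * (A * Real.exp (-(ε * (n:ℝ) ^ (α - 1)))) with hudef
    have hu_summable : Summable u := by
      have hw := aux_summable d A ε (α - 1) hε (by linarith)
      refine (summable_nat_add_iff 1).mp ?_
      refine ((summable_nat_add_iff 1).mpr hw).congr fun n => ?_
      simp [hudef]
    have htsum : (∑' n, P (s n)) ≠ ⊤ := by
      have hle : ∀ n, P (s n) ≤ ENNReal.ofReal (u n) := by
        intro n
        rcases Nat.eq_zero_or_pos n with h0 | h1
        · subst h0
          simp only [hudef, if_pos rfl, ENNReal.ofReal_one]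
          exact prob_le_one
        · rw [hudef]
          simp only [Nat.pos_iff_ne_zero.mp h1, if_false]
          exact hbound n h1
      have hunn : ∀ n, 0 ≤ u n := by
        intro n
        rcases Nat.eq_zero_or_pos n with h0 | h1
        · subst h0; simp [hudef]
        · rw [hudef]; simp only [Nat.pos_iff_ne_zero.mp h1, if_false]; positivity
      have h1 : (∑' n, P (s n)) ≤ ENNReal.ofReal (∑' n, u n) := by
        calc (∑' n, P (s n)) ≤ ∑' n, ENNReal.ofReal (u n) := ENNReal.tsum_le_tsum hle
          _ = ENNReal.ofReal (∑' n, u n) :=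
              (ENNReal.ofReal_tsum_of_nonneg hunn hu_summable).symm
      exact (lt_of_le_of_lt h1 ENNReal.ofReal_lt_top).ne
    filter_upwards [ae_eventually_notMem htsum] with ω hω
    filter_upwards [hω] with n hn
    exact hn
  rw [← ae_all_iff] at key
  filter_upwards [key] with ω hω
  rw [NormedAddCommGroup.tendsto_nhds_zero]
  intro δ hδ
  obtain ⟨k, hk⟩ := exists_nat_one_div_lt hδ
  filter_upwards [hω k, eventually_ge_atTop 1] with n hn hn1
  push_neg at hn
  have hrn := hrpos n hn1
  have hfn : ((n:ℝ) ^ α - ((n:ℝ) - 1) ^ α)⁻¹ * M ω n ≤ 1/((k:ℝ)+1) := by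
    have : (r n)⁻¹ * M ω n ≤ (r n)⁻¹ * ((1/((k:ℝ)+1)) * r n) :=
      mul_le_mul_of_nonneg_left hn (inv_nonneg.mpr hrn.le)
    calc ((n:ℝ) ^ α - ((n:ℝ) - 1) ^ α)⁻¹ * M ω n
        = (r n)⁻¹ * M ω n := rfl
      _ ≤ (r n)⁻¹ * ((1/((k:ℝ)+1)) * r n) := this
      _ = 1/((k:ℝ)+1) := by field_simp
  have hfn0 : 0 ≤ ((n:ℝ) ^ α - ((n:ℝ) - 1) ^ α)⁻¹ * M ω n :=
    mul_nonneg (inv_nonneg.mpr hrn.le) (hMnonneg ω n)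
  rw [Real.norm_eq_abs, abs_of_nonneg hfn0]
  calc ((n:ℝ) ^ α - ((n:ℝ) - 1) ^ α)⁻¹ * M ω n ≤ 1/((k:ℝ)+1) := hfn
    _ < δ := by exact_mod_cast hk
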